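/- Let ψ : ℝ → ℝ be differentiable with n vanishing moments (∫ x^k ψ(x) dx = 0 for 0 ≤ k < n), and suppose ‖ψ‖₁, ‖ψ'‖_∞, ‖x^{n+1}ψ‖₁, ‖(x^{n+1}ψ)'‖_∞, and ‖x^n ψ‖₁ are all finite. Then Hψ(x) is well-defined for every x and there is a constant C, depending only on these norms, such that |Hψ(x)| ≤ C/(1+|x|^{n+1}) for all x ∈ ℝ. -/

import Mathlib

open MeasureTheory Filter Real Set


lemma absUGT_meas (ε : ℝ) : MeasurableSet {t : ℝ | ε < |t|} :=
  measurableSet_lt measurable_const (measurable_id.abs)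

lemma compl_absUGT (ε : ℝ) : {t : ℝ | ε < |t|}ᶜ = Icc (-ε) ε := by
  ext t; simp [abs_le, not_lt, and_comm, neg_le, Icc]

-- truncated integral tends to full integral
lemma lemB (h : ℝ → ℝ) (hint : Integrable h) :
    Tendsto (fun ε : ℝ => ∫ t in {t : ℝ | ε < |t|}, h t) (nhdsWithin 0 (Ioi 0))
      (nhds (∫ t, h t)) := by
  have hG : Continuous fun b : ℝ => ∫ t in (0:ℝ)..b, h t := hint.continuous_primitive 0
  have hF : Tendsto (fun ε : ℝ => (∫ t, h t) - ((∫ t in (0:ℝ)..ε, h t) - ∫ t in (0:ℝ)..(-ε), h t))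
      (nhdsWithin 0 (Ioi 0)) (nhds (∫ t, h t)) := by
    have : Tendsto (fun ε : ℝ => (∫ t, h t) - ((∫ t in (0:ℝ)..ε, h t) - ∫ t in (0:ℝ)..(-ε), h t))
        (nhds 0) (nhds ((∫ t, h t) - ((∫ t in (0:ℝ)..(0:ℝ), h t) - ∫ t in (0:ℝ)..(-0:ℝ), h t))) :=
      tendsto_const_nhds.sub ((hG.tendsto 0).sub
        ((hG.tendsto (-0)).comp (continuous_neg.tendsto 0)))
    simpa using this.mono_left nhdsWithin_le_nhds
  refine hF.congr' ?_
  filter_upwards [self_mem_nhdsWithin] with ε (hε : 0 < ε)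
  have hsplit := integral_add_compl (absUGT_meas ε) hint
  rw [compl_absUGT ε] at hsplit
  have h1 : ∫ t in Icc (-ε) ε, h t = (∫ t in (0:ℝ)..ε, h t) - ∫ t in (0:ℝ)..(-ε), h t := by
    rw [integral_Icc_eq_integral_Ioc, ← intervalIntegral.integral_of_le (by linarith : -ε ≤ ε),
      ← intervalIntegral.integral_add_adjacent_intervals (a := -ε) (b := 0) (c := ε)
        (hint.intervalIntegrable) (hint.intervalIntegrable),
      intervalIntegral.integral_symm]
    ring
  linarith [hsplit, h1]


lemma lemA (ψ : ℝ → ℝ) (hdiff : Differentiable ℝ ψ) (hint : Integrable ψ)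
    (M : ℝ) (hM : ∀ x, |deriv ψ x| ≤ M) (x : ℝ) :
    ∃ L : ℝ,
      Tendsto (fun ε : ℝ => ∫ t in {t : ℝ | ε < |t|}, ψ (x - t) / t)
        (nhdsWithin 0 (Ioi 0)) (nhds L) ∧ |L| ≤ 2 * M + ∫ t, |ψ t| := by
  have hM0 : 0 ≤ M := (abs_nonneg _).trans (hM 0)
  have hcont : Continuous ψ := hdiff.continuous
  have hlip : ∀ a b : ℝ, |ψ a - ψ b| ≤ M * |a - b| := fun a b =>
    Convex.norm_image_sub_le_of_norm_deriv_le (s := univ) (fun x _ => hdiff x)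
      (fun x _ => hM x) convex_univ (mem_univ b) (mem_univ a)
  set k : ℝ → ℝ := fun t => (ψ (x - t) - ψ x) / t with hk
  have hkb : ∀ t, |k t| ≤ M := by
    intro t
    rcases eq_or_ne t 0 with rfl | ht
    · simpa [hk] using hM0
    · have := hlip (x - t) x
      rw [abs_div, div_le_iff₀ (abs_pos.2 ht)]
      calc |ψ (x - t) - ψ x| ≤ M * |x - t - x| := this
        _ = M * |t| := by rw [show x - t - x = -t by ring, abs_neg]
  have hψc : Integrable (fun t => ψ (x - t)) := hint.comp_sub_left x
  have hkmeas : Measurable k := by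
    have : Measurable fun t : ℝ => ψ (x - t) - ψ x :=
      (hcont.comp (continuous_const.sub continuous_id)).measurable.sub measurable_const
    simpa [hk, div_eq_mul_inv, Pi.mul_def] using this.mul measurable_inv
  have hmeas2 : Measurable fun t : ℝ => ψ (x - t) / t := by
    have : Measurable fun t : ℝ => ψ (x - t) :=
      (hcont.comp (continuous_const.sub continuous_id)).measurable
    simpa [div_eq_mul_inv, Pi.mul_def] using this.mul measurable_inv
  -- integrability of k on finite measure sets
  have hkint : ∀ s : Set ℝ, volume s < ⊤ → IntegrableOn k s := by
    intro s hs
    refine Integrable.mono' (g := fun _ => M) ?_ hkmeas.aestronglyMeasurable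
      (Eventually.of_forall fun t => hkb t)
    exact integrable_const_iff.2 (Or.inr ⟨by simpa using hs⟩)
  have hIoo : volume (Ioo (-1 : ℝ) 1) < ⊤ := measure_Ioo_lt_top
  -- integrability on the far set B
  set B : Set ℝ := {t : ℝ | 1 ≤ |t|} with hB
  have hBmeas : MeasurableSet B := measurableSet_le measurable_const measurable_id.abs
  have hBint : IntegrableOn (fun t => ψ (x - t) / t) B := by
    refine Integrable.mono' (hψc.norm.restrict (s := B)) hmeas2.aestronglyMeasurable ?_
    refine (ae_restrict_iff' hBmeas).2 (Eventually.of_forall fun t (ht : 1 ≤ |t|) => ?_)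
    rw [norm_div]
    exact div_le_self (norm_nonneg _) ht
  set L : ℝ := (∫ t in Ioo (-1:ℝ) 1, k t) + ∫ t in B, ψ (x - t) / t with hLdef
  have hIccint : ∀ ε : ℝ, IntegrableOn k (Icc (-ε) ε) := fun ε =>
    hkint _ measure_Icc_lt_top
  -- key identity for ε ∈ (0,1)
  have key : ∀ ε : ℝ, 0 < ε → ε < 1 →
      L - (∫ t in {t : ℝ | ε < |t|}, ψ (x - t) / t) = ∫ t in Icc (-ε) ε, k t := by
    intro ε hε hε1
    set A : Set ℝ := Ioo (-1 : ℝ) (-ε) ∪ Ioo ε 1 with hA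
    have hAmeas : MeasurableSet A := (measurableSet_Ioo).union measurableSet_Ioo
    have hAsub : A ⊆ {t : ℝ | t ≠ 0} := by
      rintro t (⟨h1, h2⟩ | ⟨h1, h2⟩) <;> simp only [mem_setOf_eq] <;> intro h <;>
        subst h <;> linarith
    have hAvol : volume A < ⊤ :=
      (measure_union_le _ _).trans_lt
        (ENNReal.add_lt_top.2 ⟨measure_Ioo_lt_top, measure_Ioo_lt_top⟩)
    have hAkint : IntegrableOn k A := hkint _ hAvol
    have hAinv : IntegrableOn (fun t : ℝ => t⁻¹) A := by
      refine Integrable.mono' (g := fun _ => ε⁻¹) ?_ measurable_inv.aestronglyMeasurable ?_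
      · exact integrable_const_iff.2 (Or.inr ⟨by simpa using hAvol⟩)
      · refine (ae_restrict_iff' hAmeas).2 (Eventually.of_forall fun t ht => ?_)
        have h1 : ε ≤ |t| := by
          rcases ht with ⟨h1, h2⟩ | ⟨h1, h2⟩
          · rw [abs_of_neg (by linarith)]; linarith
          · rw [abs_of_pos (by linarith)]; linarith
        rw [norm_inv, Real.norm_eq_abs]
        exact inv_anti₀ hε h1
    have hAfint : IntegrableOn (fun t => ψ (x - t) / t) A := by
      have : IntegrableOn (fun t => k t + ψ x * t⁻¹) A :=
        hAkint.add (hAinv.const_mul _)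
      refine this.congr_fun (fun t ht => ?_) hAmeas
      have ht0 : t ≠ 0 := hAsub ht
      simp only [hk, div_eq_mul_inv]; ring
    -- split domain
    have hseteq : {t : ℝ | ε < |t|} = A ∪ B := by
      ext t
      simp only [mem_setOf_eq, hA, hB, mem_union, mem_Ioo]
      constructor
      · intro h
        rcases le_or_gt 1 (|t|) with h1 | h1
        · exact Or.inr h1
        · rcases lt_or_ge t 0 with h2 | h2
          · rw [abs_of_neg h2] at h h1; exact Or.inl (Or.inl ⟨by linarith, by linarith⟩)
          · rw [abs_of_nonneg h2] at h h1; exact Or.inl (Or.inr ⟨h, h1⟩)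
      · rintro ((⟨h1, h2⟩ | ⟨h1, h2⟩) | h1)
        · rw [abs_of_neg (by linarith)]; linarith
        · rw [abs_of_pos (by linarith)]; linarith
        · linarith
    have hdisjAB : Disjoint A B := by
      refine Set.disjoint_left.2 ?_
      rintro t (⟨h1, h2⟩ | ⟨h1, h2⟩) (ht : 1 ≤ |t|)
      · rw [abs_of_neg (by linarith)] at ht; linarith
      · rw [abs_of_pos (by linarith)] at ht; linarith
    have hsplit : (∫ t in {t : ℝ | ε < |t|}, ψ (x - t) / t)
        = (∫ t in A, ψ (x - t) / t) + ∫ t in B, ψ (x - t) / t := by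
      rw [hseteq]
      exact setIntegral_union hdisjAB hBmeas hAfint hBint
    -- on A, replace integrand by k + const * inv
    have hAeq : (∫ t in A, ψ (x - t) / t) = (∫ t in A, k t) + ψ x * ∫ t in A, t⁻¹ := by
      rw [← MeasureTheory.integral_const_mul, ← integral_add hAkint (hAinv.const_mul _)]
      refine setIntegral_congr_fun hAmeas (fun t ht => ?_)
      have ht0 : t ≠ 0 := hAsub ht
      simp only [hk, div_eq_mul_inv]; ring
    -- symmetric integral of 1/t vanishes
    have hinv0 : (∫ t in A, (t : ℝ)⁻¹) = 0 := by
      have hd : Disjoint (Ioo (-1 : ℝ) (-ε)) (Ioo ε 1) := by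
        refine Set.disjoint_left.2 ?_
        rintro t ⟨h1, h2⟩ ⟨h3, h4⟩; linarith
      have hsplit2 : (∫ t in A, (t : ℝ)⁻¹)
          = (∫ t in Ioo (-1 : ℝ) (-ε), t⁻¹) + ∫ t in Ioo ε 1, (t : ℝ)⁻¹ := by
        rw [hA]
        exact setIntegral_union hd measurableSet_Ioo
          (hAinv.mono_set subset_union_left) (hAinv.mono_set subset_union_right)
      have h1 : (∫ t in Ioo (-1 : ℝ) (-ε), (t : ℝ)⁻¹) = Real.log ε := by
        rw [← integral_Ioc_eq_integral_Ioo,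
          ← intervalIntegral.integral_of_le (by linarith : (-1 : ℝ) ≤ -ε),
          integral_inv (by
            intro h
            rcases h with ⟨h1, h2⟩
            simp only [min_le_iff, le_max_iff] at h1 h2
            rcases h1 with h1 | h1 <;> rcases h2 with h2 | h2 <;> linarith)]
        rw [neg_div_neg_eq, div_one]
      have h2 : (∫ t in Ioo ε 1, (t : ℝ)⁻¹) = Real.log ε⁻¹ := by
        rw [← integral_Ioc_eq_integral_Ioo,
          ← intervalIntegral.integral_of_le (by linarith : ε ≤ 1),
          integral_inv (by
            intro h
            rcases h with ⟨h1, h2⟩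
            simp only [min_le_iff, le_max_iff] at h1 h2
            rcases h1 with h1 | h1 <;> rcases h2 with h2 | h2 <;> linarith)]
        rw [one_div]
      rw [hsplit2, h1, h2, Real.log_inv]; ring
    -- split Ioo (-1) 1 into A and Icc (-ε) ε
    have hIooeq : Ioo (-1 : ℝ) 1 = A ∪ Icc (-ε) ε := by
      ext t
      simp only [hA, mem_union, mem_Ioo, mem_Icc]
      constructor
      · intro ⟨h1, h2⟩
        rcases le_or_gt t (-ε) with h3 | h3
        · rcases eq_or_lt_of_le h3 with rfl | h4
          · exact Or.inr ⟨le_refl _, by linarith⟩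
          · exact Or.inl (Or.inl ⟨h1, h4⟩)
        · rcases le_or_gt t ε with h4 | h4
          · exact Or.inr ⟨by linarith, h4⟩
          · exact Or.inl (Or.inr ⟨h4, h2⟩)
      · rintro ((⟨h1, h2⟩ | ⟨h1, h2⟩) | ⟨h1, h2⟩) <;> constructor <;> linarith
    have hdisjAI : Disjoint A (Icc (-ε) ε) := by
      refine Set.disjoint_left.2 ?_
      rintro t (⟨h1, h2⟩ | ⟨h1, h2⟩) ⟨h3, h4⟩ <;> linarith
    have hksplit : (∫ t in Ioo (-1 : ℝ) 1, k t)
        = (∫ t in A, k t) + ∫ t in Icc (-ε) ε, k t := by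
      rw [hIooeq]
      exact setIntegral_union hdisjAI measurableSet_Icc hAkint (hIccint ε)
    rw [hsplit, hAeq, hinv0, hLdef, hksplit]; ring
  refine ⟨L, ?_, ?_⟩
  · rw [tendsto_iff_norm_sub_tendsto_zero]
    have hb : Tendsto (fun ε : ℝ => M * (2 * ε)) (nhdsWithin 0 (Ioi 0)) (nhds 0) := by
      have h1 : Tendsto (fun ε : ℝ => M * (2 * ε)) (nhds 0) (nhds (M * (2 * 0))) :=
        (continuous_const.mul (continuous_const.mul continuous_id)).tendsto 0
      simpa using h1.mono_left nhdsWithin_le_nhds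
    refine squeeze_zero' (Eventually.of_forall fun ε => norm_nonneg _) ?_ hb
    filter_upwards [Ioo_mem_nhdsGT_of_mem (by norm_num : (0:ℝ) ∈ Ico (0:ℝ) 1)]
      with ε hε
    obtain ⟨hε0, hε1⟩ := hε
    have hkey := key ε hε0 hε1
    have : ‖(∫ t in {t : ℝ | ε < |t|}, ψ (x - t) / t) - L‖ = ‖∫ t in Icc (-ε) ε, k t‖ := by
      rw [← norm_neg]; congr 1; linarith [hkey]
    rw [this]
    calc ‖∫ t in Icc (-ε) ε, k t‖ ≤ M * (volume (Icc (-ε) ε)).toReal :=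
          norm_setIntegral_le_of_norm_le_const measure_Icc_lt_top
            (fun t _ => hkb t)
      _ = M * (2 * ε) := by
          rw [Real.volume_Icc, ENNReal.toReal_ofReal (by linarith)]; ring_nf
  · have h1 : ‖∫ t in Ioo (-1 : ℝ) 1, k t‖ ≤ M * 2 := by
      have := norm_setIntegral_le_of_norm_le_const (f := k) (C := M) hIoo
        (fun t _ => hkb t)
      calc ‖∫ t in Ioo (-1 : ℝ) 1, k t‖ ≤ M * (volume (Ioo (-1:ℝ) 1)).toReal := this
        _ = M * 2 := by rw [Real.volume_Ioo]; norm_num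
    have h2 : ‖∫ t in B, ψ (x - t) / t‖ ≤ ∫ t, |ψ t| := by
      calc ‖∫ t in B, ψ (x - t) / t‖ ≤ ∫ t in B, ‖ψ (x - t) / t‖ :=
            norm_integral_le_integral_norm _
        _ ≤ ∫ t in B, ‖ψ (x - t)‖ := by
            refine setIntegral_mono_on hBint.norm (hψc.norm.restrict (s := B)) hBmeas
              (fun t (ht : 1 ≤ |t|) => ?_)
            rw [norm_div]
            exact div_le_self (norm_nonneg _) ht
        _ ≤ ∫ t, ‖ψ (x - t)‖ :=
            setIntegral_le_integral hψc.norm (Eventually.of_forall fun t => norm_nonneg _)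
        _ = ∫ t, |ψ t| := by
            rw [show (fun t => ‖ψ (x - t)‖) = fun t => |ψ (x - t)| from rfl]
            exact integral_sub_left_eq_self (fun t => |ψ t|) volume x
    calc |L| ≤ ‖∫ t in Ioo (-1 : ℝ) 1, k t‖ + ‖∫ t in B, ψ (x - t) / t‖ := by
          rw [hLdef]; exact abs_add_le _ _
      _ ≤ M * 2 + ∫ t, |ψ t| := add_le_add h1 h2
      _ = 2 * M + ∫ t, |ψ t| := by ring


lemma alg_decomp (n : ℕ) (x t a : ℝ) (hx : x ≠ 0) (ht : t ≠ 0) :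
    a / t = (∑ k ∈ Finset.range (n + 1), (x ^ (k + 1))⁻¹ * ((x - t) ^ k * a))
      + (x ^ (n + 1))⁻¹ * (((x - t) ^ (n + 1) * a) / t) := by
  induction n with
  | zero =>
    simp only [Finset.sum_range_one, pow_one, pow_zero, one_mul, zero_add]
    field_simp
    ring
  | succ m ih =>
    rw [Finset.sum_range_succ]
    rw [ih]
    have key : (x ^ (m + 1))⁻¹ * (((x - t) ^ (m + 1) * a) / t)
        = (x ^ (m + 1 + 1))⁻¹ * ((x - t) ^ (m + 1) * a)
          + (x ^ (m + 1 + 1))⁻¹ * (((x - t) ^ (m + 1 + 1) * a) / t) := by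
      field_simp
      ring
    linarith [key]




/-- **decay and vanishing moments.** If `ψ` is differentiable with `n`
vanishing moments and `‖ψ‖₁`, `‖ψ'‖_∞`, `‖x^{n+1}ψ‖₁`, `‖(x^{n+1}ψ)'‖_∞`, `‖x^n ψ‖₁`
are all finite, then the principal-value Hilbert transform `Hψ(x)` is well-defined for
every `x` and `|Hψ(x)| ≤ C/(1+|x|^{n+1})` for some constant `C`. -/
theorem hilbert_transform_decay_of_vanishing_moments (ψ : ℝ → ℝ) (n : ℕ)
    (hdiff : Differentiable ℝ ψ)
    (hmom : ∀ k < n, ∫ x, x ^ k * ψ x = 0)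
    (hint : Integrable ψ) (M : ℝ) (hM : ∀ x, |deriv ψ x| ≤ M)
    (hgint : Integrable (fun x => x ^ (n + 1) * ψ x)) (M' : ℝ)
    (hM' : ∀ x, |deriv (fun x => x ^ (n + 1) * ψ x) x| ≤ M')
    (hnint : Integrable (fun x => x ^ n * ψ x)) :
    ∃ Hψ : ℝ → ℝ,
      (∀ x : ℝ, Tendsto (fun ε : ℝ => (1 / π) * ∫ t in {t : ℝ | ε < |t|}, ψ (x - t) / t)
        (nhdsWithin 0 (Ioi 0)) (nhds (Hψ x))) ∧
      ∃ C : ℝ, 0 < C ∧ ∀ x : ℝ, |Hψ x| ≤ C / (1 + |x| ^ (n + 1)) := by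
  have hM0 : 0 ≤ M := (abs_nonneg _).trans (hM 0)
  have hM'0 : 0 ≤ M' := (abs_nonneg _).trans (hM' 0)
  set g : ℝ → ℝ := fun s => s ^ (n + 1) * ψ s with hgdef
  have hgdiff : Differentiable ℝ g := (differentiable_pow (n + 1)).mul hdiff
  -- integrability of the moment weights
  have hφint : ∀ k, k ≤ n + 1 → Integrable (fun s : ℝ => s ^ k * ψ s) := by
    intro k hk
    refine Integrable.mono' (g := fun s => |ψ s| + |g s|) (hint.abs.add hgint.abs)
      (((continuous_pow k).mul hdiff.continuous).aestronglyMeasurable) ?_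
    refine Eventually.of_forall fun s => ?_
    simp only [Real.norm_eq_abs, abs_mul, abs_pow, hgdef]
    have habs : |s| ^ k ≤ 1 + |s| ^ (n + 1) := by
      rcases le_or_gt (|s|) 1 with hs | hs
      · have := pow_le_one₀ (abs_nonneg s) hs (n := k)
        nlinarith [pow_nonneg (abs_nonneg s) (n + 1)]
      · have := pow_le_pow_right₀ hs.le hk
        linarith
    nlinarith [abs_nonneg (ψ s), pow_nonneg (abs_nonneg s) (n + 1), abs_nonneg s]
  -- the principal values for ψ and g
  choose L hL1 hL2 using fun x => lemA ψ hdiff hint M hM x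
  choose Lg hLg1 hLg2 using fun x => lemA g hgdiff hgint M' hM' x
  set m : ℕ → ℝ := fun k => ∫ s, s ^ k * ψ s with hmdef
  -- the key identity for x ≠ 0
  have hid : ∀ x : ℝ, x ≠ 0 → L x = (x ^ (n + 1))⁻¹ * m n + (x ^ (n + 1))⁻¹ * Lg x := by
    intro x hx
    have hxp : (x : ℝ) ^ (n + 1) ≠ 0 := pow_ne_zero _ hx
    -- limit of the decomposed truncated integrals
    have htend2 : Tendsto
        (fun ε : ℝ => (∑ k ∈ Finset.range (n + 1),
            (x ^ (k + 1))⁻¹ * ∫ t in {t : ℝ | ε < |t|}, (x - t) ^ k * ψ (x - t))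
          + (x ^ (n + 1))⁻¹ * ∫ t in {t : ℝ | ε < |t|}, g (x - t) / t)
        (nhdsWithin 0 (Ioi 0))
        (nhds ((∑ k ∈ Finset.range (n + 1), (x ^ (k + 1))⁻¹ * m k)
          + (x ^ (n + 1))⁻¹ * Lg x)) := by
      refine Tendsto.add (tendsto_finset_sum _ fun k hk => ?_) ?_
      · have hik : Integrable (fun t : ℝ => (x - t) ^ k * ψ (x - t)) :=
          (hφint k (Finset.mem_range.1 hk).le).comp_sub_left x
        have := (lemB _ hik).const_mul ((x ^ (k + 1))⁻¹)
        have heq : (∫ t : ℝ, (x - t) ^ k * ψ (x - t)) = m k := by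
          rw [hmdef]
          exact integral_sub_left_eq_self (fun s => s ^ k * ψ s) volume x
        rwa [heq] at this
      · exact (hLg1 x).const_mul _
    -- the truncated integrals agree for ε > 0
    have hcongr : ∀ᶠ ε : ℝ in nhdsWithin 0 (Ioi 0),
        (∑ k ∈ Finset.range (n + 1),
            (x ^ (k + 1))⁻¹ * ∫ t in {t : ℝ | ε < |t|}, (x - t) ^ k * ψ (x - t))
          + (x ^ (n + 1))⁻¹ * (∫ t in {t : ℝ | ε < |t|}, g (x - t) / t)
        = ∫ t in {t : ℝ | ε < |t|}, ψ (x - t) / t := by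
      filter_upwards [self_mem_nhdsWithin] with ε (hε : 0 < ε)
      set S := {t : ℝ | ε < |t|} with hS
      have hSmeas : MeasurableSet S := absUGT_meas ε
      have hsum_int : IntegrableOn
          (fun t : ℝ => ∑ k ∈ Finset.range (n + 1),
            (x ^ (k + 1))⁻¹ * ((x - t) ^ k * ψ (x - t))) S := by
        refine (integrable_finset_sum _ fun k hk => ?_).restrict
        exact (((hφint k (by
          simp only [Finset.mem_range] at hk; omega)).comp_sub_left x).const_mul _)
      have hgc : Integrable (fun t : ℝ => g (x - t)) := hgint.comp_sub_left x
      have hgmeas : Measurable fun t : ℝ => (x ^ (n + 1))⁻¹ * (g (x - t) / t) := by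
        have h1 : Measurable fun t : ℝ => g (x - t) :=
          (hgdiff.continuous.comp (continuous_const.sub continuous_id)).measurable
        simpa [div_eq_mul_inv] using (h1.mul measurable_inv).const_mul _
      have htail_int : IntegrableOn
          (fun t : ℝ => (x ^ (n + 1))⁻¹ * (g (x - t) / t)) S := by
        refine Integrable.mono' (g := fun t => |(x ^ (n + 1))⁻¹| * (|g (x - t)| * ε⁻¹))
          (((hgc.abs.mul_const _).const_mul _).restrict (s := S))
          hgmeas.aestronglyMeasurable ?_
        refine (ae_restrict_iff' hSmeas).2 (Eventually.of_forall fun t (ht : ε < |t|) => ?_)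
        have ht0 : (0 : ℝ) < |t| := lt_trans hε ht
        simp only [Real.norm_eq_abs, abs_mul, abs_div, div_eq_mul_inv]
        gcongr
        rw [abs_inv]
        exact inv_anti₀ hε ht.le
      have hpt : ∀ t ∈ S, ψ (x - t) / t
          = (∑ k ∈ Finset.range (n + 1), (x ^ (k + 1))⁻¹ * ((x - t) ^ k * ψ (x - t)))
            + (x ^ (n + 1))⁻¹ * (((x - t) ^ (n + 1) * ψ (x - t)) / t) := by
        intro t ht
        have ht0 : t ≠ 0 := by
          intro h; rw [h] at ht; simp only [hS, mem_setOf_eq, abs_zero] at ht; linarith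
        exact alg_decomp n x t (ψ (x - t)) hx ht0
      calc (∑ k ∈ Finset.range (n + 1),
            (x ^ (k + 1))⁻¹ * ∫ t in S, (x - t) ^ k * ψ (x - t))
          + (x ^ (n + 1))⁻¹ * (∫ t in S, g (x - t) / t)
          = (∫ t in S, ∑ k ∈ Finset.range (n + 1),
              (x ^ (k + 1))⁻¹ * ((x - t) ^ k * ψ (x - t)))
            + ∫ t in S, (x ^ (n + 1))⁻¹ * (g (x - t) / t) := by
            rw [integral_finset_sum]
            · simp_rw [MeasureTheory.integral_const_mul]
            · intro k hk
              exact (((hφint k (by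
                simp only [Finset.mem_range] at hk; omega)).comp_sub_left x).const_mul
                  _).restrict
        _ = ∫ t in S, ((∑ k ∈ Finset.range (n + 1),
              (x ^ (k + 1))⁻¹ * ((x - t) ^ k * ψ (x - t)))
            + (x ^ (n + 1))⁻¹ * (g (x - t) / t)) := (integral_add hsum_int htail_int).symm
        _ = ∫ t in S, ψ (x - t) / t := by
            refine setIntegral_congr_fun hSmeas (fun t ht => ?_)
            exact (hpt t ht).symm
    have := tendsto_nhds_unique (htend2.congr' hcongr) (hL1 x)
    -- simplify the sum using vanishing moments
    rw [← this, Finset.sum_range_succ]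
    have hzero : ∀ k ∈ Finset.range n, (x ^ (k + 1))⁻¹ * m k = 0 := by
      intro k hk
      rw [hmdef]
      simp only
      rw [hmom k (Finset.mem_range.1 hk), mul_zero]
    rw [Finset.sum_eq_zero hzero, zero_add]
  -- assemble the answer
  refine ⟨fun x => (1 / π) * L x, fun x => (hL1 x).const_mul _, ?_⟩
  set Bψ : ℝ := 2 * M + ∫ t, |ψ t| with hBψ
  set Bg : ℝ := |m n| + (2 * M' + ∫ t, |g t|) with hBg
  set C0 : ℝ := max Bψ Bg with hC0
  have hBψ0 : 0 ≤ Bψ := by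
    have : (0:ℝ) ≤ ∫ t, |ψ t| := integral_nonneg fun t => abs_nonneg _
    rw [hBψ]; linarith
  have hC00 : 0 ≤ C0 := le_trans hBψ0 (le_max_left _ _)
  have hπ : (0:ℝ) < π := pi_pos
  refine ⟨2 * C0 / π + 1, by positivity, fun x => ?_⟩
  have hxp1 : (0:ℝ) < 1 + |x| ^ (n + 1) := by positivity
  show |1 / π * L x| ≤ (2 * C0 / π + 1) / (1 + |x| ^ (n + 1))
  rw [le_div_iff₀ hxp1]
  · -- main bound
    have hH : |1 / π * L x| = (1 / π) * |L x| := by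
      rw [abs_mul, abs_of_pos (by positivity : (0:ℝ) < 1 / π)]
    rw [hH]
    rcases le_or_gt (|x|) 1 with hx1 | hx1
    · have hb1 : |L x| ≤ C0 := (hL2 x).trans (le_max_left _ _)
      have hb2 : 1 + |x| ^ (n + 1) ≤ 2 := by
        have := pow_le_one₀ (abs_nonneg x) hx1 (n := n + 1)
        linarith
      calc 1 / π * |L x| * (1 + |x| ^ (n + 1)) ≤ 1 / π * C0 * 2 := by
            exact mul_le_mul (mul_le_mul_of_nonneg_left hb1 (by positivity)) hb2
              (by positivity) (by positivity)
        _ = 2 * C0 / π := by ring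
        _ ≤ 2 * C0 / π + 1 := by linarith
    · have hx0 : x ≠ 0 := by intro h; rw [h] at hx1; simp at hx1; linarith
      have hxpow : (1:ℝ) ≤ |x| ^ (n + 1) := one_le_pow₀ hx1.le
      have hxpos : (0:ℝ) < |x| ^ (n + 1) := by linarith
      have hb1 : |L x| ≤ Bg / |x| ^ (n + 1) := by
        rw [hid x hx0]
        have habs : |(x ^ (n + 1))⁻¹ * m n + (x ^ (n + 1))⁻¹ * Lg x|
            ≤ (|x| ^ (n + 1))⁻¹ * (|m n| + |Lg x|) := by
          calc |(x ^ (n + 1))⁻¹ * m n + (x ^ (n + 1))⁻¹ * Lg x|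
              ≤ |(x ^ (n + 1))⁻¹ * m n| + |(x ^ (n + 1))⁻¹ * Lg x| := abs_add_le _ _
            _ = (|x| ^ (n + 1))⁻¹ * (|m n| + |Lg x|) := by
                rw [abs_mul, abs_mul, abs_inv, abs_pow]; ring
        refine habs.trans ?_
        rw [div_eq_inv_mul, hBg]
        have hsum : |m n| + |Lg x| ≤ |m n| + (2 * M' + ∫ t, |g t|) := by
          linarith [hLg2 x]
        exact mul_le_mul_of_nonneg_left hsum (by positivity)
      have hb2 : 1 + |x| ^ (n + 1) ≤ 2 * |x| ^ (n + 1) := by linarith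
      have hBgC0 : Bg ≤ C0 := le_max_right _ _
      calc 1 / π * |L x| * (1 + |x| ^ (n + 1))
          ≤ 1 / π * (C0 / |x| ^ (n + 1)) * (2 * |x| ^ (n + 1)) := by
            have h1 : |L x| ≤ C0 / |x| ^ (n + 1) := hb1.trans (by gcongr)
            exact mul_le_mul (mul_le_mul_of_nonneg_left h1 (by positivity)) hb2
              (by positivity) (by positivity)
        _ = 2 * C0 / π := by field_simp
        _ ≤ 2 * C0 / π + 1 := by linarith
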